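/- arXiv:1706.01852 — 2 statements merged into one kernel-verified Lean document; each statement's English description precedes it below -/
import Mathlib

section
/- Fix x^(0) ∈ ℝ^n and define the sequence x^(t) = iso_{i_t}(x^(t-1)) where i_t = 1 + ((t−1) mod (n−1)). Then x^(t) converges to iso(x^(0)) as t → ∞. -/
open MeasureTheory Filter ProbabilityTheory
open scoped RealInnerProductSpace

noncomputable section

/-- The isotonic (monotone nondecreasing) cone in `ℝ^n` with the Euclidean norm. -/
def monoCone (n : ℕ) : Set (EuclideanSpace ℝ (Fin n)) :=
  {v | ∀ i j : Fin n, i ≤ j → v i ≤ v j}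

open Classical in
/-- Euclidean projection onto the monotone cone (chosen minimizer of the distance). -/
def isoProj {n : ℕ} (x : EuclideanSpace ℝ (Fin n)) : EuclideanSpace ℝ (Fin n) :=
  if h : ∃ z ∈ monoCone n, ∀ w ∈ monoCone n, dist x z ≤ dist x w then h.choose else x

/-- The map `A_i` replacing entries `i` and `i+1` (0-based) by their common average. -/
def avgMap {n : ℕ} (i : ℕ) (x : EuclideanSpace ℝ (Fin n)) : EuclideanSpace ℝ (Fin n) :=
  WithLp.toLp 2 fun j => if h : i + 1 < n then
      (if (j : ℕ) = i ∨ (j : ℕ) = i + 1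
        then (x ⟨i, by omega⟩ + x ⟨i + 1, h⟩) / 2 else x j)
    else x j

/-- One step of neighbor pooling: average entries `i`, `i+1` if they violate monotonicity. -/
def isoStep {n : ℕ} (i : ℕ) (x : EuclideanSpace ℝ (Fin n)) : EuclideanSpace ℝ (Fin n) :=
  if h : i + 1 < n then
    (if x ⟨i, by omega⟩ ≤ x ⟨i + 1, h⟩ then x else avgMap i x)
  else x

/-- Nonincreasing under neighbor averaging. -/
def NUNA {n : ℕ} (N : Seminorm ℝ (EuclideanSpace ℝ (Fin n))) : Prop :=
  ∀ x : EuclideanSpace ℝ (Fin n), ∀ i : ℕ, i + 1 < n → N (avgMap i x) ≤ N x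

/-- Average of the `m` entries of `x` starting at (0-based) index `a`. -/
def wavg {n : ℕ} (x : EuclideanSpace ℝ (Fin n)) (a m : ℕ) : ℝ :=
  (∑ t ∈ Finset.range m, if h : a + t < n then x ⟨a + t, h⟩ else 0) / m

/-- The sliding window seminorm with weight function `ψ`. -/
def swNorm {n : ℕ} (ψ : ℕ → ℝ) (x : EuclideanSpace ℝ (Fin n)) : ℝ :=
  sSup {r | ∃ a m : ℕ, 1 ≤ m ∧ a + m ≤ n ∧ r = |wavg x a m| * ψ m}

variable {n : ℕ}

lemma monoCone_zero_mem : (0 : EuclideanSpace ℝ (Fin n)) ∈ monoCone n := by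
  intro i j _; simp

lemma monoCone_convex : Convex ℝ (monoCone n) := by
  intro v hv w hw a b ha hb hab i j hij
  have h1 := hv i j hij; have h2 := hw i j hij
  simp only [PiLp.add_apply, PiLp.smul_apply, smul_eq_mul]
  nlinarith

lemma continuous_eval (i : Fin n) : Continuous fun v : EuclideanSpace ℝ (Fin n) => v i :=
  (continuous_apply i).comp (PiLp.continuousLinearEquiv 2 ℝ (fun _ : Fin n => ℝ)).continuous

lemma monoCone_isClosed : IsClosed (monoCone n) := by
  have : monoCone n = ⋂ (i : Fin n) (j : Fin n) (_ : i ≤ j),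
      {v : EuclideanSpace ℝ (Fin n) | v i ≤ v j} := by
    ext v; simp [monoCone]
  rw [this]
  exact isClosed_iInter fun i => isClosed_iInter fun j => isClosed_iInter fun _ =>
    isClosed_le (continuous_eval i) (continuous_eval j)

lemma isoProj_spec (x : EuclideanSpace ℝ (Fin n)) :
    isoProj x ∈ monoCone n ∧ ∀ w ∈ monoCone n, dist x (isoProj x) ≤ dist x w := by
  have hex : ∃ z ∈ monoCone n, ∀ w ∈ monoCone n, dist x z ≤ dist x w := by
    obtain ⟨v, hv, hmin⟩ := exists_norm_eq_iInf_of_complete_convex ⟨0, monoCone_zero_mem⟩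
      monoCone_isClosed.isComplete monoCone_convex x
    refine ⟨v, hv, fun w hw => ?_⟩
    rw [dist_eq_norm, dist_eq_norm, hmin]
    exact ciInf_le ⟨0, by rintro r ⟨w', rfl⟩; positivity⟩ (⟨w, hw⟩ : monoCone n)
  rw [isoProj, dif_pos hex]
  exact ⟨hex.choose_spec.1, hex.choose_spec.2⟩

lemma vi_of_min {x p : EuclideanSpace ℝ (Fin n)} (hp : p ∈ monoCone n)
    (hmin : ∀ w ∈ monoCone n, dist x p ≤ dist x w) :
    ∀ z ∈ monoCone n, ⟪x - p, z - p⟫ ≤ 0 := by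
  haveI : Nonempty (monoCone n) := ⟨⟨0, monoCone_zero_mem⟩⟩
  have h : ‖x - p‖ = ⨅ w : monoCone n, ‖x - w‖ := by
    apply le_antisymm
    · exact le_ciInf fun w => by simpa [dist_eq_norm] using hmin w w.2
    · exact ciInf_le ⟨0, by rintro r ⟨w, rfl⟩; positivity⟩ (⟨p, hp⟩ : monoCone n)
  exact (norm_eq_iInf_iff_real_inner_le_zero monoCone_convex hp).mp h

lemma min_unique {x p q : EuclideanSpace ℝ (Fin n)} (hp : p ∈ monoCone n)
    (hminp : ∀ w ∈ monoCone n, dist x p ≤ dist x w) (hq : q ∈ monoCone n)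
    (hminq : ∀ w ∈ monoCone n, dist x q ≤ dist x w) : p = q := by
  have h1 := vi_of_min hp hminp q hq
  have h2 := vi_of_min hq hminq p hp
  have key : ‖q - p‖ ^ 2 = ⟪x - p, q - p⟫ + ⟪x - q, p - q⟫ := by
    rw [← real_inner_self_eq_norm_sq]
    simp only [inner_sub_left, inner_sub_right]
    ring
  have : ‖q - p‖ ^ 2 ≤ 0 := by linarith
  have : q - p = 0 := by
    have := pow_eq_zero_iff (n := 2) (by norm_num) |>.mp (le_antisymm this (by positivity))
    exact norm_eq_zero.mp this
  linear_combination (norm := abel) -this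

lemma isoProj_of_mem {z : EuclideanSpace ℝ (Fin n)} (hz : z ∈ monoCone n) : isoProj z = z := by
  have h := (isoProj_spec z).2 z hz
  simp only [dist_self] at h
  exact (dist_le_zero.mp h).symm

lemma isoProj_eq_of_min {x q : EuclideanSpace ℝ (Fin n)} (hq : q ∈ monoCone n)
    (hminq : ∀ w ∈ monoCone n, dist x q ≤ dist x w) : isoProj x = q :=
  min_unique (isoProj_spec x).1 (isoProj_spec x).2 hq hminq

lemma isoProj_lipschitz (a b : EuclideanSpace ℝ (Fin n)) :
    ‖isoProj a - isoProj b‖ ≤ ‖a - b‖ := by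
  set p := isoProj a with hpd; set q := isoProj b with hqd
  have h1 : ⟪a - p, q - p⟫ ≤ 0 := vi_of_min (isoProj_spec a).1 (isoProj_spec a).2 q (isoProj_spec b).1
  have h2 : ⟪b - q, p - q⟫ ≤ 0 := vi_of_min (isoProj_spec b).1 (isoProj_spec b).2 p (isoProj_spec a).1
  have key : ‖p - q‖ ^ 2 ≤ ⟪a - b, p - q⟫ := by
    have e : ⟪a - b, p - q⟫ - ‖p - q‖ ^ 2 = (-⟪a - p, q - p⟫) + (-⟪b - q, p - q⟫) := by
      rw [← real_inner_self_eq_norm_sq]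
      simp only [inner_sub_left, inner_sub_right]
      ring
    nlinarith
  have h3 := real_inner_le_norm (a - b) (p - q)
  by_cases h : p - q = 0
  · simp [h]
  · have hpos : 0 < ‖p - q‖ := norm_pos_iff.mpr h
    nlinarith

/-- the direction vector -/
def uVec (i : ℕ) (h : i + 1 < n) : EuclideanSpace ℝ (Fin n) :=
  EuclideanSpace.single ⟨i, by omega⟩ (1:ℝ) - EuclideanSpace.single ⟨i+1, h⟩ 1

lemma inner_uVec (i : ℕ) (h : i + 1 < n) (z : EuclideanSpace ℝ (Fin n)) :
    ⟪uVec i h, z⟫ = z ⟨i, by omega⟩ - z ⟨i+1, h⟩ := by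
  rw [uVec, inner_sub_left, EuclideanSpace.inner_single_left, EuclideanSpace.inner_single_left]
  simp

lemma uVec_apply_left (i : ℕ) (h : i + 1 < n) : uVec i h ⟨i, by omega⟩ = 1 := by
  simp [uVec, PiLp.sub_apply, EuclideanSpace.single_apply, Fin.ext_iff]

lemma uVec_apply_right (i : ℕ) (h : i + 1 < n) : uVec i h ⟨i+1, h⟩ = -1 := by
  simp [uVec, PiLp.sub_apply, EuclideanSpace.single_apply, Fin.ext_iff]

lemma norm_uVec_sq (i : ℕ) (h : i + 1 < n) : ‖uVec i h‖ ^ 2 = 2 := by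
  rw [← real_inner_self_eq_norm_sq, inner_uVec, uVec_apply_left, uVec_apply_right]
  norm_num

lemma avgMap_eq (i : ℕ) (h : i + 1 < n) (x : EuclideanSpace ℝ (Fin n)) :
    avgMap i x = x - ((x ⟨i, by omega⟩ - x ⟨i+1, h⟩)/2) • uVec i h := by
  ext j
  simp only [avgMap, PiLp.toLp_apply, dif_pos h, PiLp.sub_apply, PiLp.smul_apply, uVec,
    EuclideanSpace.single_apply, smul_eq_mul]
  by_cases h1 : (j : ℕ) = i
  · have : j = (⟨i, by omega⟩ : Fin n) := Fin.ext h1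
    rw [if_pos (Or.inl h1), if_pos this, if_neg (by simp [Fin.ext_iff]; omega), this]
    ring
  · by_cases h2 : (j : ℕ) = i + 1
    · have : j = (⟨i+1, h⟩ : Fin n) := Fin.ext h2
      rw [if_pos (Or.inr h2), if_neg (by simp [Fin.ext_iff]; omega), if_pos this, this]
      ring
    · rw [if_neg (by tauto), if_neg (by simp [Fin.ext_iff]; omega),
        if_neg (by simp [Fin.ext_iff]; omega)]
      ring

lemma isoStep_firm (i : ℕ) (x w : EuclideanSpace ℝ (Fin n))
    (hw : ∀ h : i + 1 < n, w ⟨i, by omega⟩ ≤ w ⟨i+1, h⟩) :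
    ‖isoStep i x - w‖ ^ 2 + ‖isoStep i x - x‖ ^ 2 ≤ ‖x - w‖ ^ 2 := by
  by_cases h : i + 1 < n
  · rw [isoStep, dif_pos h]
    by_cases hv : x ⟨i, by omega⟩ ≤ x ⟨i+1, h⟩
    · rw [if_pos hv]; simp
    · rw [if_neg hv, avgMap_eq i h x]
      set δ := (x ⟨i, by omega⟩ - x ⟨i+1, h⟩)/2 with hδ
      have e1 : x - δ • uVec i h - w = (x - w) - δ • uVec i h := by abel
      have e2 : x - δ • uVec i h - x = -(δ • uVec i h) := by abel
      rw [e1, e2, norm_neg, norm_sub_sq_real, real_inner_smul_right,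
        real_inner_comm, inner_uVec, norm_smul, mul_pow, norm_uVec_sq]
      have hxw : (x - w) ⟨i, by omega⟩ = x ⟨i, by omega⟩ - w ⟨i, by omega⟩ := rfl
      have hxw' : (x - w) ⟨i+1, h⟩ = x ⟨i+1, h⟩ - w ⟨i+1, h⟩ := rfl
      rw [hxw, hxw']
      have h1 := hw h
      have h2 : ‖δ‖ ^ 2 = δ ^ 2 := by rw [Real.norm_eq_abs, sq_abs]
      rw [h2]
      push_neg at hv
      nlinarith [sq_nonneg δ]
  · rw [isoStep, dif_neg h]; simp

lemma isoStep_adj (i : ℕ) (h : i + 1 < n) (x : EuclideanSpace ℝ (Fin n)) :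
    isoStep i x ⟨i, by omega⟩ ≤ isoStep i x ⟨i+1, h⟩ := by
  rw [isoStep, dif_pos h]
  by_cases hv : x ⟨i, by omega⟩ ≤ x ⟨i+1, h⟩
  · rwa [if_pos hv]
  · rw [if_neg hv]
    simp only [avgMap, dif_pos h]
    simp

/-- If `x i ≥ x (i+1)` then the projection has equal coordinates there. -/
lemma isoProj_coord_eq (i : ℕ) (h : i + 1 < n) (x : EuclideanSpace ℝ (Fin n))
    (hx : x ⟨i+1, h⟩ ≤ x ⟨i, by omega⟩) :
    isoProj x ⟨i, by omega⟩ = isoProj x ⟨i+1, h⟩ := by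
  set p := isoProj x with hpd
  have hp : p ∈ monoCone n := (isoProj_spec x).1
  have hVI := vi_of_min hp (isoProj_spec x).2
  have hle : p ⟨i, by omega⟩ ≤ p ⟨i+1, h⟩ := hp _ _ (by simp [Fin.mk_le_mk])
  rcases eq_or_lt_of_le hle with heq | hlt
  · exact heq
  exfalso
  set c := p ⟨i+1, h⟩ - p ⟨i, by omega⟩ with hc
  have hcpos : 0 < c := sub_pos.mpr hlt
  -- first perturbation: raise coordinate i
  have hz1 : p + c • EuclideanSpace.single ⟨i, by omega⟩ (1:ℝ) ∈ monoCone n := by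
    intro j k hjk
    simp only [PiLp.add_apply, PiLp.smul_apply, EuclideanSpace.single_apply, smul_eq_mul]
    by_cases hj : j = (⟨i, by omega⟩ : Fin n) <;> by_cases hk : k = (⟨i, by omega⟩ : Fin n)
    · rw [hj, hk]
    · rw [hj, if_pos rfl, if_neg hk, mul_one]
      have hik : (⟨i+1, h⟩ : Fin n) ≤ k := by
        have hjk' := hj ▸ hjk
        rw [Fin.le_def] at hjk' ⊢
        simp only [Fin.ext_iff] at hk
        simp at hjk' ⊢
        omega
      have := hp ⟨i+1, h⟩ k hik
      simp only [hc]; linarith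
    · rw [hk, if_neg hj, if_pos rfl, mul_one, mul_zero, add_zero]
      have := hp j ⟨i+1, h⟩ (le_trans (hk ▸ hjk) (by simp [Fin.le_def]))
      simp only [hc]; linarith
    · rw [if_neg hj, if_neg hk]
      simpa using hp j k hjk
  -- second perturbation: lower coordinate i+1
  have hz2 : p - c • EuclideanSpace.single ⟨i+1, h⟩ (1:ℝ) ∈ monoCone n := by
    intro j k hjk
    simp only [PiLp.sub_apply, PiLp.smul_apply, EuclideanSpace.single_apply, smul_eq_mul]
    by_cases hj : j = (⟨i+1, h⟩ : Fin n) <;> by_cases hk : k = (⟨i+1, h⟩ : Fin n)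
    · rw [hj, hk]
    · rw [hj, if_pos rfl, if_neg hk, mul_one]
      have := hp ⟨i+1, h⟩ k (hj ▸ hjk)
      simp only [hc]; linarith
    · rw [hk, if_neg hj, if_pos rfl, mul_one]
      have hik : j ≤ (⟨i, by omega⟩ : Fin n) := by
        have hjk' := hk ▸ hjk
        rw [Fin.le_def] at hjk' ⊢
        simp only [Fin.ext_iff] at hj
        simp at hjk' ⊢
        omega
      have := hp j ⟨i, by omega⟩ hik
      simp only [hc]; linarith
    · rw [if_neg hj, if_neg hk]
      simpa using hp j k hjk
  have e1 := hVI _ hz1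
  have e2 := hVI _ hz2
  rw [show p + c • EuclideanSpace.single ⟨i, by omega⟩ (1:ℝ) - p
      = c • EuclideanSpace.single ⟨i, by omega⟩ (1:ℝ) from by abel,
    real_inner_smul_right, EuclideanSpace.inner_single_right] at e1
  rw [show p - c • EuclideanSpace.single ⟨i+1, h⟩ (1:ℝ) - p
      = -(c • EuclideanSpace.single ⟨i+1, h⟩ (1:ℝ)) from by abel,
    inner_neg_right, real_inner_smul_right, EuclideanSpace.inner_single_right] at e2
  simp only [map_one, one_mul, PiLp.sub_apply, starRingEnd_apply, star_trivial] at e1 e2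
  have hA : x ⟨i, by omega⟩ ≤ p ⟨i, by omega⟩ := by nlinarith
  have hB : p ⟨i+1, h⟩ ≤ x ⟨i+1, h⟩ := by nlinarith
  linarith

/-- Key invariance: one pooling step does not change the projection. -/
lemma isoProj_isoStep (i : ℕ) (x : EuclideanSpace ℝ (Fin n)) :
    isoProj (isoStep i x) = isoProj x := by
  by_cases h : i + 1 < n
  · by_cases hv : x ⟨i, by omega⟩ ≤ x ⟨i+1, h⟩
    · rw [isoStep, dif_pos h, if_pos hv]
    · have hy : isoStep i x = x - ((x ⟨i, by omega⟩ - x ⟨i+1, h⟩)/2) • uVec i h := by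
        rw [isoStep, dif_pos h, if_neg hv, avgMap_eq i h x]
      set δ := (x ⟨i, by omega⟩ - x ⟨i+1, h⟩)/2 with hδ
      set y := isoStep i x with hyd
      have hyc : y ⟨i, by omega⟩ = y ⟨i+1, h⟩ := by
        rw [hy]
        simp only [PiLp.sub_apply, PiLp.smul_apply, smul_eq_mul, uVec,
          EuclideanSpace.single_apply]
        simp only [Fin.ext_iff]
        rw [if_neg (by omega : ¬ i = i + 1), if_neg (by omega : ¬ i + 1 = i)]
        simp only [if_true]
        ring
      set p := isoProj x with hpd
      set q := isoProj y with hqd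
      have hpK : p ∈ monoCone n := (isoProj_spec x).1
      have hqK : q ∈ monoCone n := (isoProj_spec y).1
      have hpc : p ⟨i, by omega⟩ = p ⟨i+1, h⟩ := isoProj_coord_eq i h x (not_le.mp hv).le
      have hqc : q ⟨i, by omega⟩ = q ⟨i+1, h⟩ := isoProj_coord_eq i h y hyc.ge
      have key : ∀ z : EuclideanSpace ℝ (Fin n), z ⟨i, by omega⟩ = z ⟨i+1, h⟩ →
          ‖x - z‖ ^ 2 = ‖y - z‖ ^ 2 + 2 * δ ^ 2 := by
        intro z hz
        have e : x - z = (y - z) + δ • uVec i h := by rw [hy]; abel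
        rw [e, norm_add_sq_real, real_inner_smul_right, real_inner_comm, inner_uVec,
          norm_smul, mul_pow, norm_uVec_sq]
        have : (y - z) ⟨i, by omega⟩ - (y - z) ⟨i+1, h⟩ = 0 := by
          simp only [PiLp.sub_apply]; rw [hyc, hz]; ring
        rw [this]
        have h2 : ‖δ‖ ^ 2 = δ ^ 2 := by rw [Real.norm_eq_abs, sq_abs]
        rw [h2]; ring
      -- p minimizes dist y over the cone
      have hpmin : ∀ w ∈ monoCone n, dist y p ≤ dist y w := by
        have hyq : dist y p ≤ dist y q := by
          have h1 : dist y p ^ 2 ≤ dist y q ^ 2 := by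
            have e1 := key p hpc
            have e2 := key q hqc
            have h3 : dist x p ≤ dist x q := (isoProj_spec x).2 q hqK
            have h4 : dist x p ^ 2 ≤ dist x q ^ 2 :=
              pow_le_pow_left₀ dist_nonneg h3 2
            simp only [dist_eq_norm] at *
            linarith
          exact le_of_pow_le_pow_left₀ two_ne_zero dist_nonneg h1
        intro w hw
        exact le_trans hyq ((isoProj_spec y).2 w hw)
      rw [hqd, isoProj_eq_of_min hpK hpmin]
  · rw [isoStep, dif_neg h]

lemma mem_monoCone_of_adjacent {z : EuclideanSpace ℝ (Fin n)}
    (hz : ∀ i : ℕ, ∀ h : i + 1 < n, z ⟨i, by omega⟩ ≤ z ⟨i+1, h⟩) : z ∈ monoCone n := by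
  have key : ∀ d : ℕ, ∀ jj : ℕ, ∀ hjj : jj + d < n, z ⟨jj, by omega⟩ ≤ z ⟨jj + d, hjj⟩ := by
    intro d
    induction d with
    | zero => intro jj hjj; exact le_refl _
    | succ d ih =>
      intro jj hjj
      exact le_trans (ih jj (by omega)) (hz (jj + d) (by omega))
  intro j k hjk
  have hjk' : (j : ℕ) ≤ k := hjk
  have hd := key ((k : ℕ) - j) j (by omega)
  have e1 : j = (⟨(j : ℕ), by omega⟩ : Fin n) := by simp
  have e2 : k = (⟨(j : ℕ) + ((k : ℕ) - j), by omega⟩ : Fin n) := Fin.ext (by simp; omega)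
  rw [e1, e2]
  exact hd


theorem stmt6 (n : ℕ) (hn : 2 ≤ n) (x0 : EuclideanSpace ℝ (Fin n))
    (seq : ℕ → EuclideanSpace ℝ (Fin n)) (h0 : seq 0 = x0)
    (hstep : ∀ t : ℕ, seq (t + 1) = isoStep (t % (n - 1)) (seq t)) :
    Tendsto seq atTop (nhds (isoProj x0)) := by
  set m := n - 1 with hm
  have hm1 : 1 ≤ m := by omega
  -- Fejér monotonicity
  have fej : ∀ t : ℕ, ∀ w ∈ monoCone n,
      ‖seq (t+1) - w‖ ^ 2 + ‖seq (t+1) - seq t‖ ^ 2 ≤ ‖seq t - w‖ ^ 2 := by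
    intro t w hw
    rw [hstep t]
    exact isoStep_firm _ _ _ (fun h => hw _ _ (by simp [Fin.mk_le_mk]))
  -- step sizes tend to zero
  set b : ℕ → ℝ := fun t => ‖seq (t+1) - seq t‖ with hbd
  have hb0 : ∀ t, 0 ≤ b t := fun t => norm_nonneg _
  set a : ℕ → ℝ := fun t => ‖seq t - 0‖ ^ 2 with had
  have hstep2 : ∀ t, a (t+1) + b t ^ 2 ≤ a t := fun t => fej t 0 monoCone_zero_mem
  have hanti : Antitone a := antitone_nat_of_succ_le fun t => by
    have := hstep2 t; nlinarith [sq_nonneg (b t)]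
  have ha0 : ∀ t, 0 ≤ a t := fun t => sq_nonneg _
  have haconv : Tendsto a atTop (nhds (⨅ t, a t)) :=
    tendsto_atTop_ciInf hanti ⟨0, by rintro r ⟨t, rfl⟩; exact ha0 t⟩
  have hbsq : Tendsto (fun t => b t ^ 2) atTop (nhds 0) := by
    have h1 : Tendsto (fun t => a t - a (t+1)) atTop (nhds 0) := by
      have h2 : Tendsto (fun t => a (t+1)) atTop (nhds (⨅ t, a t)) :=
        haconv.comp (tendsto_add_atTop_nat 1)
      simpa using haconv.sub h2
    exact squeeze_zero (fun t => sq_nonneg _) (fun t => by have := hstep2 t; linarith) h1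
  have hbt : Tendsto b atTop (nhds 0) := by
    have h1 : Tendsto (fun t => Real.sqrt (b t ^ 2)) atTop (nhds (Real.sqrt 0)) :=
      (Real.continuous_sqrt.tendsto 0).comp hbsq
    have h2 : (fun t => Real.sqrt (b t ^ 2)) = b := funext fun t => by
      rw [Real.sqrt_sq (hb0 t)]
    rwa [h2, Real.sqrt_zero] at h1
  -- bounded, extract convergent subsequence
  have hball : ∀ t, seq t ∈ Metric.closedBall (0 : EuclideanSpace ℝ (Fin n)) ‖seq 0 - 0‖ := by
    intro t
    rw [Metric.mem_closedBall, dist_eq_norm]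
    have h1 : a t ≤ a 0 := hanti (Nat.zero_le t)
    exact le_of_pow_le_pow_left₀ two_ne_zero (norm_nonneg _) h1
  obtain ⟨z, -, φ, hφ, hzlim⟩ := (isCompact_closedBall (0 : EuclideanSpace ℝ (Fin n))
    ‖seq 0 - 0‖).tendsto_subseq hball
  -- telescoping estimate
  have tel : ∀ s j : ℕ, j ≤ m → ‖seq (s + j) - seq s‖ ≤ ∑ l ∈ Finset.range m, b (s + l) := by
    intro s j hj
    have h1 : ∀ j : ℕ, ‖seq (s + j) - seq s‖ ≤ ∑ l ∈ Finset.range j, b (s + l) := by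
      intro j
      induction j with
      | zero => simp
      | succ j ih =>
        have h2 : ‖seq (s + (j+1)) - seq s‖ ≤ ‖seq (s + j + 1) - seq (s + j)‖
            + ‖seq (s + j) - seq s‖ := by
          rw [show s + (j+1) = s + j + 1 by omega]
          exact norm_sub_le_norm_sub_add_norm_sub _ _ _
        rw [Finset.sum_range_succ]
        have : b (s + j) = ‖seq (s + j + 1) - seq (s + j)‖ := by rw [hbd]
        linarith
    exact le_trans (h1 j) (Finset.sum_le_sum_of_subset_of_nonneg
      (Finset.range_subset_range.mpr hj) (fun l _ _ => hb0 _))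
  have hsum0 : Tendsto (fun k => ∑ l ∈ Finset.range m, b (φ k + l)) atTop (nhds 0) := by
    have h1 : ∀ l : ℕ, Tendsto (fun k => b (φ k + l)) atTop (nhds 0) := fun l =>
      hbt.comp ((tendsto_add_atTop_nat l).comp hφ.tendsto_atTop)
    have h2 : Tendsto (fun k => ∑ l ∈ Finset.range m, b (φ k + l)) atTop
        (nhds (∑ _l ∈ Finset.range m, (0:ℝ))) :=
      tendsto_finset_sum _ (fun l _ => h1 l)
    simpa using h2
  have haux : ∀ v : ℕ → ℕ, (∀ k, v k ≤ m) →
      Tendsto (fun k => seq (φ k + v k)) atTop (nhds z) := by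
    intro v hv
    have h1 : Tendsto (fun k => seq (φ k + v k) - seq (φ k)) atTop (nhds 0) := by
      rw [tendsto_zero_iff_norm_tendsto_zero]
      exact squeeze_zero (fun k => norm_nonneg _) (fun k => tel (φ k) (v k) (hv k)) hsum0
    have h2 := h1.add hzlim
    simp only [zero_add] at h2
    have h3 : (fun k => seq (φ k + v k))
        = fun k => (seq (φ k + v k) - seq (φ k)) + (seq ∘ φ) k := by
      funext k; simp [Function.comp]
    rw [h3]; exact h2
  -- the limit is in the cone
  have hzK : z ∈ monoCone n := by
    apply mem_monoCone_of_adjacent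
    intro i h
    have him : i < m := by omega
    set v : ℕ → ℕ := fun k => (i + m - φ k % m) % m with hvd
    have hvm : ∀ k, v k < m := fun k => Nat.mod_lt _ (by omega)
    have htmod : ∀ k, (φ k + v k) % m = i := by
      intro k
      have hrm : φ k % m < m := Nat.mod_lt _ (by omega)
      set r := φ k % m with hr
      have hveq : v k = if r ≤ i then i - r else i + m - r := by
        simp only [hvd, ← hr]
        rcases le_or_gt r i with hc | hc
        · rw [if_pos hc, show i + m - r = (i - r) + m by omega, Nat.add_mod_right,
            Nat.mod_eq_of_lt (by omega)]
        · rw [if_neg (by omega), Nat.mod_eq_of_lt (by omega)]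
      have hq := Nat.div_add_mod (φ k) m
      rw [hveq]
      rcases le_or_gt r i with hc | hc
      · rw [if_pos hc, show φ k + (i - r) = m * (φ k / m) + i by omega,
          Nat.mul_add_mod, Nat.mod_eq_of_lt him]
      · rw [if_neg (by omega), show φ k + (i + m - r) = m * (φ k / m) + m + i by omega,
          show m * (φ k / m) + m + i = m * (φ k / m + 1) + i by rw [Nat.mul_succ],
          Nat.mul_add_mod, Nat.mod_eq_of_lt him]
    have hA : Tendsto (fun k => seq (φ k + v k)) atTop (nhds z) :=
      haux v (fun k => (hvm k).le)
    have hB : Tendsto (fun k => seq (φ k + v k + 1)) atTop (nhds z) := by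
      have := haux (fun k => v k + 1) (fun k => hvm k)
      simpa [← Nat.add_assoc] using this
    have hC : ∀ k, seq (φ k + v k + 1) ⟨i, by omega⟩ ≤ seq (φ k + v k + 1) ⟨i+1, h⟩ := by
      intro k
      rw [hstep (φ k + v k), htmod k]
      exact isoStep_adj i h _
    have e1 : Tendsto (fun k => seq (φ k + v k + 1) ⟨i, by omega⟩) atTop
        (nhds (z ⟨i, by omega⟩)) := ((continuous_eval _).tendsto z).comp hB
    have e2 : Tendsto (fun k => seq (φ k + v k + 1) ⟨i+1, h⟩) atTop
        (nhds (z ⟨i+1, h⟩)) := ((continuous_eval _).tendsto z).comp hB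
    exact le_of_tendsto_of_tendsto' e1 e2 hC
  -- the whole sequence converges to z
  have hanti2 : Antitone fun t => ‖seq t - z‖ := antitone_nat_of_succ_le fun t => by
    have h1 := fej t z hzK
    have h2 : ‖seq (t+1) - z‖ ^ 2 ≤ ‖seq t - z‖ ^ 2 := by nlinarith [sq_nonneg (b t)]
    exact le_of_pow_le_pow_left₀ two_ne_zero (norm_nonneg _) h2
  have hsub : Tendsto (fun k => ‖seq (φ k) - z‖) atTop (nhds 0) :=
    tendsto_iff_norm_sub_tendsto_zero.mp hzlim
  have hlim : Tendsto (fun t => ‖seq t - z‖) atTop (nhds 0) := by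
    have hbdd : BddBelow (Set.range fun t => ‖seq t - z‖) :=
      ⟨0, by rintro r ⟨t, rfl⟩; exact norm_nonneg _⟩
    have h1 := tendsto_atTop_ciInf hanti2 hbdd
    have h2 : Tendsto (fun k => ‖seq (φ k) - z‖) atTop
        (nhds (⨅ t, ‖seq t - z‖)) := h1.comp hφ.tendsto_atTop
    have h3 := tendsto_nhds_unique h2 hsub
    rwa [h3] at h1
  have hseqz : Tendsto seq atTop (nhds z) := tendsto_iff_norm_sub_tendsto_zero.mpr hlim
  -- identify the limit
  have hproj : ∀ t, isoProj (seq t) = isoProj x0 := by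
    intro t
    induction t with
    | zero => rw [h0]
    | succ t ih => rw [hstep t, isoProj_isoStep, ih]
  have hcont : Continuous (isoProj (n := n)) := by
    have : LipschitzWith 1 (isoProj (n := n)) := LipschitzWith.of_dist_le_mul fun p q => by
      simpa [dist_eq_norm] using isoProj_lipschitz p q
    exact this.continuous
  have h4 : Tendsto (fun t => isoProj (seq t)) atTop (nhds (isoProj z)) :=
    (hcont.tendsto z).comp hseqz
  simp only [hproj] at h4
  have h5 : isoProj z = isoProj x0 := tendsto_nhds_unique h4 tendsto_const_nhds
  rw [← h5, isoProj_of_mem hzK]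
  exact hseqz
end
end

section
/- If x ∈ ℝ^n is ε-monotone, meaning x_i ≤ x_j + ε for all 1 ≤ i ≤ j ≤ n, then ‖x − iso(x)‖_∞ ≤ ε, where iso(x) is the Euclidean projection of x onto the monotone cone. -/
open MeasureTheory Filter ProbabilityTheory

noncomputable section

lemma distSqEq {n : ℕ} (y z : EuclideanSpace ℝ (Fin n)) :
    dist y z ^ 2 = ∑ j, (y j - z j) ^ 2 := by
  rw [EuclideanSpace.dist_eq, Real.sq_sqrt (by positivity)]
  exact Finset.sum_congr rfl fun j _ => by rw [Real.dist_eq, sq_abs]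

lemma expandSq {n : ℕ} (x p : EuclideanSpace ℝ (Fin n)) (S : Finset (Fin n)) (t : ℝ) :
    ∑ j, (x j - (if j ∈ S then p j + t else p j)) ^ 2
      = ∑ j, (x j - p j) ^ 2 + (-(2*t) * (∑ j ∈ S, (x j - p j)) + t ^ 2 * S.card) := by
  have h1 : ∀ j : Fin n, (x j - (if j ∈ S then p j + t else p j)) ^ 2
      = (x j - p j) ^ 2 + (if j ∈ S then -(2*t) * (x j - p j) + t ^ 2 else 0) := by
    intro j; split_ifs <;> ring
  rw [Finset.sum_congr rfl fun j _ => h1 j, Finset.sum_add_distrib]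
  congr 1
  rw [Finset.sum_ite_mem, Finset.univ_inter, Finset.sum_add_distrib, ← Finset.mul_sum,
    Finset.sum_const, nsmul_eq_mul]
  ring

lemma perturbUp {n : ℕ} (x p : EuclideanSpace ℝ (Fin n))
    (hmin : ∀ w ∈ monoCone n, dist x p ≤ dist x w)
    (S : Finset (Fin n)) (δ : ℝ) (hδ : 0 < δ)
    (hw : ∀ t : ℝ, 0 < t → t ≤ δ →
      (WithLp.toLp 2 (fun j => if j ∈ S then p j + t else p j) : EuclideanSpace ℝ (Fin n)) ∈ monoCone n) :
    ∑ j ∈ S, (x j - p j) ≤ 0 := by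
  by_contra h
  push_neg at h
  set A := ∑ j ∈ S, (x j - p j) with hA
  have hm : 0 < (S.card : ℝ) := by
    rcases S.eq_empty_or_nonempty with rfl | hne
    · simp [hA] at h
    · exact_mod_cast Finset.card_pos.mpr hne
  set t := min δ (A / S.card) with ht
  have ht0 : 0 < t := lt_min hδ (div_pos h hm)
  have htA : t * S.card ≤ A := by
    rw [← le_div_iff₀ hm]; exact min_le_right _ _
  have hd := hmin _ (hw t ht0 (min_le_left _ _))
  have hsq := pow_le_pow_left₀ dist_nonneg hd 2
  rw [distSqEq, distSqEq] at hsq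
  simp only [WithLp.ofLp_toLp] at hsq
  rw [expandSq] at hsq
  nlinarith [mul_le_mul_of_nonneg_left htA ht0.le, mul_pos ht0 h]

lemma perturbDown {n : ℕ} (x p : EuclideanSpace ℝ (Fin n))
    (hmin : ∀ w ∈ monoCone n, dist x p ≤ dist x w)
    (S : Finset (Fin n)) (δ : ℝ) (hδ : 0 < δ)
    (hw : ∀ t : ℝ, 0 < t → t ≤ δ →
      (WithLp.toLp 2 (fun j => if j ∈ S then p j - t else p j) : EuclideanSpace ℝ (Fin n)) ∈ monoCone n) :
    0 ≤ ∑ j ∈ S, (x j - p j) := by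
  by_contra h
  push_neg at h
  set A := ∑ j ∈ S, (x j - p j) with hA
  have hm : 0 < (S.card : ℝ) := by
    rcases S.eq_empty_or_nonempty with rfl | hne
    · simp [hA] at h
    · exact_mod_cast Finset.card_pos.mpr hne
  set t := min δ (-A / S.card) with ht
  have ht0 : 0 < t := lt_min hδ (div_pos (by linarith) hm)
  have htA : t * S.card ≤ -A := by
    rw [← le_div_iff₀ hm]; exact min_le_right _ _
  have hd := hmin _ (hw t ht0 (min_le_left _ _))
  have hsq := pow_le_pow_left₀ dist_nonneg hd 2
  have hrw : (WithLp.toLp 2 (fun j => if j ∈ S then p j - t else p j) : EuclideanSpace ℝ (Fin n))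
      = WithLp.toLp 2 (fun j => if j ∈ S then p j + (-t) else p j) := by
    congr 1
  rw [hrw, distSqEq, distSqEq] at hsq
  simp only [WithLp.ofLp_toLp] at hsq
  rw [expandSq] at hsq
  nlinarith [mul_le_mul_of_nonneg_left htA ht0.le, mul_pos ht0 (neg_pos.mpr h)]

lemma monoConeClosed (n : ℕ) : IsClosed (monoCone n) := by
  have : monoCone n = ⋂ (i : Fin n), ⋂ (j : Fin n), ⋂ (_ : i ≤ j),
      {v : EuclideanSpace ℝ (Fin n) | v i ≤ v j} := by
    ext v; simp [monoCone]
  rw [this]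
  exact isClosed_iInter fun i => isClosed_iInter fun j => isClosed_iInter fun _ =>
    isClosed_le (EuclideanSpace.proj i).continuous (EuclideanSpace.proj j).continuous

lemma existsProj (n : ℕ) (x : EuclideanSpace ℝ (Fin n)) :
    ∃ z ∈ monoCone n, ∀ w ∈ monoCone n, dist x z ≤ dist x w := by
  obtain ⟨y, hy, hyd⟩ := (monoConeClosed n).exists_infDist_eq_dist
    ⟨0, fun i j _ => le_rfl⟩ x
  exact ⟨y, hy, fun w hw => hyd ▸ Metric.infDist_le_dist_of_mem hw⟩

theorem stmt10 (n : ℕ) (x : EuclideanSpace ℝ (Fin n)) (ε : ℝ) (hε : 0 ≤ ε)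
    (hmono : ∀ i j : Fin n, i ≤ j → x i ≤ x j + ε) :
    ∀ i : Fin n, |x i - isoProj x i| ≤ ε := by
  intro i
  have hex : ∃ z ∈ monoCone n, ∀ w ∈ monoCone n, dist x z ≤ dist x w := existsProj n x
  have hproj : isoProj x = hex.choose := by rw [isoProj, dif_pos hex]
  set p := isoProj x with hpdef
  have hp : p ∈ monoCone n := hproj ▸ hex.choose_spec.1
  have hmin : ∀ w ∈ monoCone n, dist x p ≤ dist x w := hproj ▸ hex.choose_spec.2
  have hpm : ∀ a b : Fin n, a ≤ b → p a ≤ p b := hp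
  have h1 : x i - p i ≤ ε := by
    set S : Finset (Fin n) := Finset.univ.filter (fun j => i ≤ j ∧ p j = p i) with hS
    set G : Finset (Fin n) := Finset.univ.filter (fun k => i ≤ k ∧ p i < p k) with hG
    set δ : ℝ := if hGn : G.Nonempty then G.inf' hGn (fun k => p k - p i) else 1 with hδdef
    have hδ : 0 < δ := by
      rw [hδdef]; split_ifs with hGn
      · rw [Finset.lt_inf'_iff]
        intro k hk
        rw [hG, Finset.mem_filter] at hk
        linarith [hk.2.2]
      · norm_num
    have hw : ∀ t : ℝ, 0 < t → t ≤ δ →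
        (WithLp.toLp 2 (fun j => if j ∈ S then p j + t else p j) : EuclideanSpace ℝ (Fin n)) ∈ monoCone n := by
      intro t ht htδ
      intro a b hab
      by_cases haS : a ∈ S <;> by_cases hbS : b ∈ S <;>
        simp only [WithLp.ofLp_toLp, haS, hbS, if_true, if_false]
      · rw [hS, Finset.mem_filter] at haS hbS
        have := haS.2.2; have := hbS.2.2
        linarith
      · rw [hS, Finset.mem_filter] at haS hbS
        have hib : i ≤ b := le_trans haS.2.1 hab
        have hne : p b ≠ p i := fun hpb => hbS ⟨Finset.mem_univ b, hib, hpb⟩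
        have hlt : p i < p b := lt_of_le_of_ne (hpm i b hib) (Ne.symm hne)
        have hbG : b ∈ G := by rw [hG, Finset.mem_filter]; exact ⟨Finset.mem_univ b, hib, hlt⟩
        have hGn : G.Nonempty := ⟨b, hbG⟩
        have hle : δ ≤ p b - p i := by
          rw [hδdef, dif_pos hGn]
          exact Finset.inf'_le _ hbG
        have := haS.2.2
        linarith
      · have := hpm a b hab; linarith
      · exact hpm a b hab
    have hsum := perturbUp x p hmin S δ hδ hw
    have hiS : i ∈ S := by rw [hS, Finset.mem_filter]; exact ⟨Finset.mem_univ i, le_refl i, rfl⟩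
    have hcard : 0 < (S.card : ℝ) := by exact_mod_cast Finset.card_pos.mpr ⟨i, hiS⟩
    have h2 : ∀ j ∈ S, x i - ε - p i ≤ x j - p j := by
      intro j hj
      rw [hS, Finset.mem_filter] at hj
      have := hmono i j hj.2.1
      rw [hj.2.2]
      linarith
    have h3 := Finset.sum_le_sum h2
    rw [Finset.sum_const, nsmul_eq_mul] at h3
    nlinarith
  have h2 : p i - x i ≤ ε := by
    set S : Finset (Fin n) := Finset.univ.filter (fun j => j ≤ i ∧ p j = p i) with hS
    set G : Finset (Fin n) := Finset.univ.filter (fun k => k ≤ i ∧ p k < p i) with hG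
    set δ : ℝ := if hGn : G.Nonempty then G.inf' hGn (fun k => p i - p k) else 1 with hδdef
    have hδ : 0 < δ := by
      rw [hδdef]; split_ifs with hGn
      · rw [Finset.lt_inf'_iff]
        intro k hk
        rw [hG, Finset.mem_filter] at hk
        linarith [hk.2.2]
      · norm_num
    have hw : ∀ t : ℝ, 0 < t → t ≤ δ →
        (WithLp.toLp 2 (fun j => if j ∈ S then p j - t else p j) : EuclideanSpace ℝ (Fin n)) ∈ monoCone n := by
      intro t ht htδ
      intro a b hab
      by_cases haS : a ∈ S <;> by_cases hbS : b ∈ S <;>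
        simp only [WithLp.ofLp_toLp, haS, hbS, if_true, if_false]
      · rw [hS, Finset.mem_filter] at haS hbS
        have := haS.2.2; have := hbS.2.2
        linarith
      · have := hpm a b hab; linarith
      · rw [hS, Finset.mem_filter] at haS hbS
        have hai : a ≤ i := le_trans hab hbS.2.1
        have hne : p a ≠ p i := fun hpa => haS ⟨Finset.mem_univ a, hai, hpa⟩
        have hlt : p a < p i := lt_of_le_of_ne (hpm a i hai) hne
        have haG : a ∈ G := by rw [hG, Finset.mem_filter]; exact ⟨Finset.mem_univ a, hai, hlt⟩
        have hGn : G.Nonempty := ⟨a, haG⟩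
        have hle : δ ≤ p i - p a := by
          rw [hδdef, dif_pos hGn]
          exact Finset.inf'_le _ haG
        have := hbS.2.2
        linarith
      · exact hpm a b hab
    have hsum := perturbDown x p hmin S δ hδ hw
    have hiS : i ∈ S := by rw [hS, Finset.mem_filter]; exact ⟨Finset.mem_univ i, le_refl i, rfl⟩
    have hcard : 0 < (S.card : ℝ) := by exact_mod_cast Finset.card_pos.mpr ⟨i, hiS⟩
    have h2 : ∀ j ∈ S, x j - p j ≤ x i + ε - p i := by
      intro j hj
      rw [hS, Finset.mem_filter] at hj
      have := hmono j i hj.2.1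
      rw [hj.2.2]
      linarith
    have h3 := Finset.sum_le_sum h2
    rw [Finset.sum_const, nsmul_eq_mul] at h3
    nlinarith
  rw [abs_le]
  constructor <;> linarith
end
end
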